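/- Let G be a set of odd positive integers whose reciprocal sum converges, and let H be a finite subset of G. Then the set A of odd positive integers n with {g ∈ G : g ∣ n} = H possesses a well-defined asymptotic density; moreover this density is positive whenever A is nonempty. -/

import Mathlib

open Filter Finset

/-- The number of elements of `S` lying in `[1, x]`. -/
noncomputable def countIn (S : Set ℕ) (x : ℕ) : ℕ := (S ∩ Set.Icc 1 x).ncard

/-- `S` has asymptotic density `δ`. -/
def HasDensity (S : Set ℕ) (δ : ℝ) : Prop :=
  Tendsto (fun x : ℕ => (countIn S x : ℝ) / x) atTop (nhds δ)

/-- The upper asymptotic density of `S`. -/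
noncomputable def upperDensity (S : Set ℕ) : ℝ :=
  limsup (fun x : ℕ => (countIn S x : ℝ) / x) atTop

/-- Let `G` be a set of odd positive integers with convergent reciprocal sum, and let `H`
be a finite subset of `G`. The set of odd positive `n` whose set of divisors belonging to
`G` equals `H` has a well-defined asymptotic density, which is positive whenever the set
is nonempty. -/
lemma countIn_eq (p : ℕ → Prop) [DecidablePred p] (x : ℕ) :
    countIn {n | p n} x = ((Finset.Icc 1 x).filter p).card := by
  rw [countIn, ← Set.ncard_coe_finset]
  congr 1
  ext n
  simp [Set.mem_Icc, and_comm]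

-- divisor count
lemma count_dvd (g x : ℕ) : ((Finset.Icc 1 x).filter (fun n => g ∣ n)).card = x / g := by
  rw [show (1:ℕ) = 0+1 from rfl, Finset.Icc_add_one_left_eq_Ioc]
  exact Nat.Ioc_filter_dvd_card_eq_div x g

lemma per_aux (p : ℕ → Prop) (q : ℕ) (hp : ∀ n, p (n + q) ↔ p n) :
    ∀ (k a : ℕ), p (a + q * k) ↔ p a := by
  intro k
  induction k with
  | zero => simp
  | succ k ih =>
    intro a
    have h : a + q * (k + 1) = (a + q * k) + q := by ring
    rw [h, hp, ih]

lemma per_mod (p : ℕ → Prop) (q : ℕ) (hp : ∀ n, p (n + q) ↔ p n) (n : ℕ) :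
    p (n % q) ↔ p n := by
  conv_rhs => rw [show n = n % q + q * (n / q) from (Nat.mod_add_div n q).symm]
  rw [per_aux p q hp]

lemma per_base (p : ℕ → Prop) [DecidablePred p] (q : ℕ) (hq : 0 < q)
    (hp : ∀ n, p (n + q) ↔ p n) :
    ((Finset.Ioc 0 q).filter p).card = ((Finset.range q).filter p).card := by
  apply Finset.card_bij' (fun n _ => n % q) (fun r _ => if r = 0 then q else r)
  · intro n hn
    simp only [mem_filter, mem_Ioc] at hn
    simp only [mem_filter, mem_range]
    exact ⟨Nat.mod_lt n hq, (per_mod p q hp n).mpr hn.2⟩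
  · intro r hr
    simp only [mem_filter, mem_range] at hr
    by_cases h : r = 0
    · subst h
      rw [if_pos rfl]
      simp only [mem_filter, mem_Ioc]
      refine ⟨⟨hq, le_refl q⟩, ?_⟩
      have h0 : q = 0 + q := by ring
      rw [h0, hp]; exact hr.2
    · rw [if_neg h]
      simp only [mem_filter, mem_Ioc]
      exact ⟨⟨Nat.pos_of_ne_zero h, le_of_lt hr.1⟩, hr.2⟩
  · intro n hn
    simp only [mem_filter, mem_Ioc] at hn
    rcases eq_or_lt_of_le hn.1.2 with h | h
    · subst h; simp
    · rw [Nat.mod_eq_of_lt h, if_neg hn.1.1.ne']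
  · intro r hr
    simp only [mem_filter, mem_range] at hr
    by_cases h : r = 0
    · subst h; simp
    · rw [if_neg h]; exact Nat.mod_eq_of_lt hr.1

lemma per_shift (p : ℕ → Prop) [DecidablePred p] (q : ℕ) (hq : 0 < q)
    (hp : ∀ n, p (n + q) ↔ p n) (y : ℕ) (hy : q ∣ y) :
    ((Finset.Ioc y (y + q)).filter p).card = ((Finset.range q).filter p).card := by
  rw [← per_base p q hq hp]
  apply Finset.card_bij' (fun n _ => n - y) (fun r _ => r + y)
  · intro n hn
    simp only [mem_filter, mem_Ioc] at hn ⊢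
    obtain ⟨k, hk⟩ := hy
    refine ⟨⟨by omega, by omega⟩, ?_⟩
    have hn2 : n = (n - y) + q * k := by omega
    rw [hn2, per_aux p q hp] at hn
    exact hn.2
  · intro r hr
    simp only [mem_filter, mem_Ioc] at hr ⊢
    obtain ⟨k, hk⟩ := hy
    refine ⟨⟨by omega, by omega⟩, ?_⟩
    have h : r + y = r + q * k := by omega
    rw [h, per_aux p q hp]
    exact hr.2
  · intro n hn
    simp only [mem_filter, mem_Ioc] at hn
    omega
  · intro r hr
    simp only [mem_filter, mem_Ioc] at hr
    omega

lemma per_blocks (p : ℕ → Prop) [DecidablePred p] (q : ℕ) (hq : 0 < q)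
    (hp : ∀ n, p (n + q) ↔ p n) : ∀ m : ℕ,
    ((Finset.Ioc 0 (m * q)).filter p).card = m * ((Finset.range q).filter p).card := by
  intro m
  induction m with
  | zero => simp
  | succ m ih =>
    have h1 : (m + 1) * q = m * q + q := by ring
    have h2 : Finset.Ioc 0 ((m+1) * q) = Finset.Ioc 0 (m * q) ∪ Finset.Ioc (m * q) (m * q + q) := by
      rw [Finset.Ioc_union_Ioc_eq_Ioc (Nat.zero_le _) (Nat.le_add_right _ _), h1]
    rw [h2, Finset.filter_union, Finset.card_union_of_disjoint, ih,
      per_shift p q hq hp (m * q) ⟨m, by ring⟩]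
    · ring
    · apply Finset.disjoint_filter_filter
      rw [Finset.disjoint_left]
      intro n h1 h2
      simp only [mem_Ioc] at h1 h2
      omega

lemma per_count_bound (p : ℕ → Prop) [DecidablePred p] (q : ℕ) (hq : 0 < q)
    (hp : ∀ n, p (n + q) ↔ p n) (x : ℕ) :
    |(((Finset.Icc 1 x).filter p).card : ℝ) -
      x * ((Finset.range q).filter p).card / q| ≤ ((Finset.range q).filter p).card := by
  set c := ((Finset.range q).filter p).card with hc
  set m := x / q with hm
  have hmq : m * q ≤ x := by have := Nat.div_mul_le_self x q; rw [hm]; linarith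
  have hxq : x < (m + 1) * q := by
    have h1 : q * m + x % q = x := Nat.div_add_mod x q
    have h2 : x % q < q := Nat.mod_lt x hq
    nlinarith
  have hsplit : Finset.Icc 1 x = Finset.Ioc 0 (m * q) ∪ Finset.Ioc (m * q) x := by
    rw [show (1:ℕ) = 0 + 1 from rfl, Finset.Icc_add_one_left_eq_Ioc,
      Finset.Ioc_union_Ioc_eq_Ioc (Nat.zero_le _) hmq]
  have hlow : m * c ≤ ((Finset.Icc 1 x).filter p).card := by
    rw [hsplit, Finset.filter_union]
    calc m * c = ((Finset.Ioc 0 (m * q)).filter p).card := (per_blocks p q hq hp m).symm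
    _ ≤ _ := Finset.card_le_card Finset.subset_union_left
  have hhigh : ((Finset.Icc 1 x).filter p).card ≤ m * c + c := by
    rw [hsplit, Finset.filter_union]
    calc ((Finset.Ioc 0 (m*q)).filter p ∪ (Finset.Ioc (m*q) x).filter p).card
        ≤ ((Finset.Ioc 0 (m*q)).filter p).card + ((Finset.Ioc (m*q) x).filter p).card :=
          Finset.card_union_le _ _
      _ ≤ m * c + c := by
          apply Nat.add_le_add
          · exact le_of_eq (per_blocks p q hq hp m)
          · rw [hc, ← per_shift p q hq hp (m * q) ⟨m, by ring⟩]
            apply Finset.card_le_card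
            apply Finset.filter_subset_filter
            apply Finset.Ioc_subset_Ioc le_rfl
            nlinarith
  have hq' : (0:ℝ) < q := by exact_mod_cast hq
  have hA : (m:ℝ) * q ≤ x := by exact_mod_cast hmq
  have hB : (x:ℝ) < (m + 1) * q := by exact_mod_cast hxq
  have hlow' : (m:ℝ) * c ≤ ((Finset.Icc 1 x).filter p).card := by exact_mod_cast hlow
  have hhigh' : (((Finset.Icc 1 x).filter p).card : ℝ) ≤ m * c + c := by exact_mod_cast hhigh
  have hc0 : (0:ℝ) ≤ c := Nat.cast_nonneg c
  rw [abs_le]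
  constructor
  · have h2 : (x:ℝ) * c / q ≤ (m + 1) * c := by
      rw [div_le_iff₀ hq']
      nlinarith
    linarith
  · have h1 : (m:ℝ) * c ≤ x * c / q := by
      rw [le_div_iff₀ hq']
      nlinarith
    linarith

lemma hasDensity_periodic (p : ℕ → Prop) [DecidablePred p] (q : ℕ) (hq : 0 < q)
    (hp : ∀ n, p (n + q) ↔ p n) :
    HasDensity {n | p n} (((Finset.range q).filter p).card / q) := by
  set c := ((Finset.range q).filter p).card with hc
  rw [HasDensity]
  rw [show (fun x : ℕ => (countIn {n | p n} x : ℝ) / x) =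
    (fun x : ℕ => ((((Finset.Icc 1 x).filter p).card : ℝ)) / x) from
    funext fun x => by rw [countIn_eq]]
  have key : ∀ x : ℕ, 1 ≤ x →
      |(((Finset.Icc 1 x).filter p).card : ℝ) / x - c / q| ≤ c / x := by
    intro x hx
    have hx' : (0:ℝ) < x := by exact_mod_cast hx
    have hq' : (0:ℝ) < q := by exact_mod_cast hq
    have hxne : (x:ℝ) ≠ 0 := ne_of_gt hx'
    have hqne : (q:ℝ) ≠ 0 := ne_of_gt hq'
    have := per_count_bound p q hq hp x
    rw [show (((Finset.Icc 1 x).filter p).card : ℝ) / x - c / q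
      = ((((Finset.Icc 1 x).filter p).card : ℝ) - x * c / q) / x by field_simp,
      abs_div, abs_of_pos hx']
    rw [← hc] at this
    gcongr
  have h0 : Tendsto (fun x : ℕ => (c : ℝ) / x) atTop (nhds 0) :=
    tendsto_const_div_atTop_nhds_zero_nat (c : ℝ)
  have h1 : Tendsto (fun x : ℕ => (((Finset.Icc 1 x).filter p).card : ℝ) / x - c / q)
      atTop (nhds 0) := by
    apply squeeze_zero_norm' _ h0
    filter_upwards [eventually_ge_atTop 1] with x hx
    rw [Real.norm_eq_abs]
    exact key x hx
  have := h1.add_const ((c : ℝ) / q)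
  simpa using this

lemma count_class_dvd (q g n₀ x : ℕ) (hq : 0 < q) (hg : 0 < g) (hn₀ : 0 < n₀)
    [DecidablePred fun n => n % q = n₀ % q ∧ g ∣ n] :
    (((Finset.Icc 1 x).filter (fun n => n % q = n₀ % q ∧ g ∣ n)).card : ℝ)
      ≤ x * n₀ / (q * g) + 1 := by
  set s := (Finset.Icc 1 x).filter (fun n => n % q = n₀ % q ∧ g ∣ n) with hs
  rcases s.eq_empty_or_nonempty with h | h
  · rw [h]
    simp only [card_empty, Nat.cast_zero]
    positivity
  · set M := Nat.lcm g q with hM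
    have hM0 : 0 < M := Nat.lcm_pos hg hq
    set n₁ := s.min' h with hn₁
    have hn₁s : n₁ ∈ s := s.min'_mem h
    have hn₁mem := hn₁s
    rw [hs, mem_filter, mem_Icc] at hn₁mem
    obtain ⟨⟨hn₁1, hn₁x⟩, hn₁q, hn₁g⟩ := hn₁mem
    -- gcd divides n₀
    have hd : Nat.gcd g q ∣ n₀ := by
      have h1 : Nat.gcd g q ∣ n₁ := (Nat.gcd_dvd_left g q).trans hn₁g
      have h2 : n₁ ≡ n₀ [MOD Nat.gcd g q] :=
        Nat.ModEq.of_dvd (Nat.gcd_dvd_right g q) hn₁q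
      have h3 : n₁ ≡ 0 [MOD Nat.gcd g q] := Nat.modEq_zero_iff_dvd.mpr h1
      exact Nat.modEq_zero_iff_dvd.mp (h2.symm.trans h3)
    -- every element of s is ≡ n₁ mod M
    have hMdvd : ∀ n ∈ s, M ∣ n - n₁ := by
      intro n hn
      have hmem := hn
      rw [hs, mem_filter, mem_Icc] at hmem
      obtain ⟨⟨hn1, hnx⟩, hnq, hng⟩ := hmem
      have hle : n₁ ≤ n := s.min'_le n hn
      apply Nat.lcm_dvd
      · exact Nat.dvd_sub hng hn₁g
      · have : n₁ ≡ n [MOD q] := hn₁q.trans hnq.symm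
        exact (Nat.modEq_iff_dvd' hle).mp this
    -- injection into range (x/M + 1)
    have hcard : s.card ≤ x / M + 1 := by
      rw [← Finset.card_range (x / M + 1)]
      apply Finset.card_le_card_of_injOn (fun n => (n - n₁) / M)
      · intro n hn
        simp only [Finset.coe_range, Set.mem_Iio]
        have hmem : n ∈ s := hn
        rw [hs, mem_filter, mem_Icc] at hmem
        have : n - n₁ ≤ x := by omega
        have := Nat.div_le_div_right (c := M) this
        omega
      · intro a ha b hb hab
        simp only at hab
        have hda := hMdvd a ha
        have hdb := hMdvd b hb
        have hla : n₁ ≤ a := s.min'_le a ha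
        have hlb : n₁ ≤ b := s.min'_le b hb
        have h1 : M * ((a - n₁) / M) = a - n₁ := Nat.mul_div_cancel' hda
        have h2 : M * ((b - n₁) / M) = b - n₁ := Nat.mul_div_cancel' hdb
        rw [hab] at h1
        omega
    -- convert to reals
    have hMn₀ : q * g ≤ M * n₀ := by
      have h1 : Nat.gcd g q * M = g * q := Nat.gcd_mul_lcm g q
      have h2 : Nat.gcd g q ≤ n₀ := Nat.le_of_dvd hn₀ hd
      calc q * g = g * q := by ring
      _ = Nat.gcd g q * M := h1.symm
      _ ≤ n₀ * M := Nat.mul_le_mul_right M h2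
      _ = M * n₀ := by ring
    have hM' : (0:ℝ) < M := by exact_mod_cast hM0
    have hqg : (0:ℝ) < (q:ℝ) * g := by positivity
    have h1 : ((x / M : ℕ) : ℝ) ≤ (x:ℝ) / M := Nat.cast_div_le
    have h2 : (x:ℝ) / M ≤ x * n₀ / (q * g) := by
      rw [div_le_div_iff₀ hM' hqg]
      have hMn₀' : (q:ℝ) * g ≤ (M:ℝ) * n₀ := by exact_mod_cast hMn₀
      nlinarith [(Nat.cast_nonneg x : (0:ℝ) ≤ x)]
    have h3 : (s.card : ℝ) ≤ (x / M : ℕ) + 1 := by exact_mod_cast hcard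
    linarith

lemma tail_small (G : Set ℕ) (hsum : Summable fun g : G => (1 : ℝ) / ((g : ℕ) : ℝ)) :
    ∀ ε : ℝ, 0 < ε → ∃ K : ℕ, ∀ t : Finset ℕ, ↑t ⊆ G → (∀ g ∈ t, K < g) →
      ∑ g ∈ t, (1:ℝ) / g < ε := by
  intro ε hε
  obtain ⟨s, hs⟩ := hsum.vanishing (e := Set.Ioo (-ε) ε) (Ioo_mem_nhds (by linarith) hε)
  refine ⟨s.sup (fun g => (g : ℕ)), fun t ht hgt => ?_⟩
  classical
  set t' : Finset G := t.attach.map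
    ⟨fun n => (⟨n.1, ht n.2⟩ : G), fun a b hab => Subtype.ext (by
      simpa using congrArg Subtype.val hab)⟩ with ht'
  have hdisj : Disjoint t' s := by
    rw [Finset.disjoint_left]
    rintro ⟨g, hgG⟩ hgt' hgs
    have h1 : s.sup (fun g => (g : ℕ)) < g := by
      rw [ht'] at hgt'
      simp only [Finset.mem_map, Finset.mem_attach, true_and, Function.Embedding.coeFn_mk] at hgt'
      obtain ⟨⟨a, ha⟩, hval⟩ := hgt'
      have : a = g := congrArg Subtype.val hval
      subst this
      exact hgt a ha
    have h2 : g ≤ s.sup (fun g => (g : ℕ)) := Finset.le_sup (f := fun g : G => (g : ℕ)) hgs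
    omega
  have := hs t' hdisj
  have hsum_eq : ∑ g ∈ t', (1:ℝ) / ((g : ℕ) : ℝ) = ∑ g ∈ t, (1:ℝ) / g := by
    have haux : ∑ a ∈ t.attach, (1:ℝ) / ((a : ℕ) : ℝ) = ∑ g ∈ t, (1:ℝ) / g :=
      Finset.sum_attach t (fun n => (1:ℝ) / (n : ℝ))
    rw [ht', Finset.sum_map]
    exact haux
  rw [hsum_eq] at this
  exact this.2

lemma count_le (p : ℕ → Prop) [DecidablePred p] (x : ℕ) :
    ((Finset.Icc 1 x).filter p).card ≤ x := by
  calc ((Finset.Icc 1 x).filter p).card ≤ (Finset.Icc 1 x).card :=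
    Finset.card_le_card (Finset.filter_subset _ _)
  _ = x := by rw [Nat.card_Icc]; omega

lemma count_mono_pt (x : ℕ) (p p' : ℕ → Prop) [DecidablePred p] [DecidablePred p']
    (h : ∀ n, 1 ≤ n → n ≤ x → p n → p' n) :
    ((Finset.Icc 1 x).filter p).card ≤ ((Finset.Icc 1 x).filter p').card := by
  apply Finset.card_le_card
  intro n hn
  rw [mem_filter, mem_Icc] at hn ⊢
  exact ⟨hn.1, h n hn.1.1 hn.1.2 hn.2⟩

lemma count_split (x : ℕ) (p pa pb : ℕ → Prop) [DecidablePred p] [DecidablePred pa]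
    [DecidablePred pb] (h : ∀ n, 1 ≤ n → n ≤ x → p n → pa n ∨ pb n) :
    ((Finset.Icc 1 x).filter p).card
      ≤ ((Finset.Icc 1 x).filter pa).card + ((Finset.Icc 1 x).filter pb).card := by
  calc ((Finset.Icc 1 x).filter p).card
      ≤ ((Finset.Icc 1 x).filter pa ∪ (Finset.Icc 1 x).filter pb).card := by
        apply Finset.card_le_card
        intro n hn
        rw [mem_filter, mem_Icc] at hn
        rw [Finset.mem_union, mem_filter, mem_filter, mem_Icc]
        rcases h n hn.1.1 hn.1.2 hn.2 with h' | h'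
        · exact Or.inl ⟨hn.1, h'⟩
        · exact Or.inr ⟨hn.1, h'⟩
    _ ≤ _ := Finset.card_union_le _ _

lemma div_cast_mono {a b : ℕ} (x : ℕ) (h : a ≤ b) : (a:ℝ)/x ≤ (b:ℝ)/x := by
  rcases Nat.eq_zero_or_pos x with rfl | hx
  · simp
  · have : (0:ℝ) < x := by exact_mod_cast hx
    gcongr


theorem stmt3 (G : Set ℕ) (hG : ∀ g ∈ G, 0 < g ∧ Odd g)
    (hsum : Summable fun g : G => (1 : ℝ) / ((g : ℕ) : ℝ))
    (H : Finset ℕ) (hH : ↑H ⊆ G) :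
    ∃ δ : ℝ,
      HasDensity {n : ℕ | 0 < n ∧ Odd n ∧ {g ∈ G | g ∣ n} = ↑H} δ ∧
      ({n : ℕ | 0 < n ∧ Odd n ∧ {g ∈ G | g ∣ n} = ↑H}.Nonempty → 0 < δ) := by
  classical
  set pA : ℕ → Prop := fun n => 0 < n ∧ Odd n ∧ {g ∈ G | g ∣ n} = ↑H with hpA
  set f : ℕ → ℝ := fun x : ℕ => (countIn {n | pA n} x : ℝ) / x with hf
  have hf01 : ∀ x, 0 ≤ f x ∧ f x ≤ 1 := by
    intro x
    constructor
    · positivity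
    · rw [hf]
      simp only
      rw [countIn_eq]
      rcases Nat.eq_zero_or_pos x with rfl | hx
      · simp
      · have hx' : (0:ℝ) < x := by exact_mod_cast hx
        rw [div_le_one hx']
        exact_mod_cast count_le _ x
  have hbddle : IsBoundedUnder (· ≤ ·) atTop f := isBoundedUnder_of ⟨1, fun x => (hf01 x).2⟩
  have hbddge : IsBoundedUnder (· ≥ ·) atTop f := isBoundedUnder_of ⟨0, fun x => (hf01 x).1⟩
  -- main claim: limsup ≤ liminf + ε
  have main : ∀ ε : ℝ, 0 < ε → limsup f atTop ≤ liminf f atTop + ε := by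
    intro ε hε
    obtain ⟨K₀, hK₀⟩ := tail_small G hsum ε hε
    set K := max K₀ (H.sup id) with hK
    set GK := (Finset.Icc 1 K).filter (· ∈ G) with hGK
    have hGKsub : ∀ g ∈ GK, g ∈ G := by
      intro g hg; rw [hGK, mem_filter] at hg; exact hg.2
    set P := GK.prod id with hPdef
    have hP : 0 < P := Finset.prod_pos (fun g hg => (hG g (hGKsub g hg)).1)
    set q := 2 * P with hqdef
    have hq : 0 < q := by omega
    set pK : ℕ → Prop := fun n => Odd n ∧ ∀ g ∈ GK, (g ∣ n ↔ g ∈ H) with hpK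
    have hper : ∀ n, pK (n + q) ↔ pK n := by
      intro n
      rw [hpK]
      simp only
      apply and_congr
      · rw [Nat.odd_iff, Nat.odd_iff, hqdef]
        omega
      · apply forall_congr'
        intro g
        apply forall_congr'
        intro hg
        have hdvd : g ∣ q := Dvd.dvd.mul_left (Finset.dvd_prod_of_mem id hg) 2
        have hdd : g ∣ n + q ↔ g ∣ n :=
          ⟨fun h' => by simpa using Nat.dvd_sub h' hdvd, fun h' => dvd_add h' hdvd⟩
        rw [hdd]
    have hAK := hasDensity_periodic pK q hq hper
    set δK : ℝ := (((Finset.range q).filter pK).card : ℝ) / q with hδK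
    have hTK : Tendsto (fun x : ℕ => (countIn {n | pK n} x : ℝ) / x) atTop (nhds δK) := hAK
    have hAsubK : ∀ n, pA n → pK n := by
      intro n hn
      obtain ⟨hpos, hodd, hset⟩ := hn
      refine ⟨hodd, fun g hg => ?_⟩
      constructor
      · intro hdvd
        have h' : g ∈ {g | g ∈ G ∧ g ∣ n} := ⟨hGKsub g hg, hdvd⟩
        rw [hset] at h'
        exact Finset.mem_coe.mp h'
      · intro hgH
        have h' : g ∈ ({g | g ∈ G ∧ g ∣ n} : Set ℕ) := by
          rw [hset]; exact Finset.mem_coe.mpr hgH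
        exact h'.2
    set pBad : ℕ → Prop := fun n => ∃ g, g ∈ G ∧ K < g ∧ g ∣ n with hpBad
    have hKtoA : ∀ n, 1 ≤ n → pK n → pA n ∨ pBad n := by
      intro n hn1 hn
      by_cases hb : pBad n
      · exact Or.inr hb
      · left
        obtain ⟨hodd, hdiv⟩ := hn
        refine ⟨by omega, hodd, ?_⟩
        ext g
        simp only [Set.mem_setOf_eq, Finset.coe_mem, Finset.mem_coe]
        constructor
        · rintro ⟨hgG, hgd⟩
          by_cases hgK : g ≤ K
          · have hgGK : g ∈ GK := by
              rw [hGK, mem_filter, mem_Icc]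
              exact ⟨⟨(hG g hgG).1, hgK⟩, hgG⟩
            exact (hdiv g hgGK).mp hgd
          · exact absurd ⟨g, hgG, by omega, hgd⟩ hb
        · intro hgH
          have hgG : g ∈ G := hH (Finset.mem_coe.mpr hgH)
          have hgK : g ≤ K := le_trans (Finset.le_sup (f := id) hgH) (le_max_right _ _)
          have hgGK : g ∈ GK := by
            rw [hGK, mem_filter, mem_Icc]
            exact ⟨⟨(hG g hgG).1, hgK⟩, hgG⟩
          exact ⟨hgG, (hdiv g hgGK).mpr hgH⟩
    have hbad : ∀ x : ℕ, (((Finset.Icc 1 x).filter pBad).card : ℝ) ≤ ε * x := by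
      intro x
      set F := (Finset.Ioc K x).filter (· ∈ G) with hF
      have hsub : (Finset.Icc 1 x).filter pBad ⊆
          F.biUnion (fun g => (Finset.Icc 1 x).filter (fun n => g ∣ n)) := by
        intro n hn
        rw [mem_filter, mem_Icc] at hn
        obtain ⟨⟨hn1, hnx⟩, g, hgG, hgK, hgd⟩ := hn
        rw [Finset.mem_biUnion]
        refine ⟨g, ?_, ?_⟩
        · rw [hF, mem_filter, mem_Ioc]
          exact ⟨⟨hgK, le_trans (Nat.le_of_dvd (by omega) hgd) hnx⟩, hgG⟩
        · rw [mem_filter, mem_Icc]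
          exact ⟨⟨hn1, hnx⟩, hgd⟩
      have hcard1 : ((Finset.Icc 1 x).filter pBad).card ≤ ∑ g ∈ F, x / g := by
        calc ((Finset.Icc 1 x).filter pBad).card
            ≤ (F.biUnion (fun g => (Finset.Icc 1 x).filter (fun n => g ∣ n))).card :=
              Finset.card_le_card hsub
          _ ≤ ∑ g ∈ F, ((Finset.Icc 1 x).filter (fun n => g ∣ n)).card :=
              Finset.card_biUnion_le
          _ = ∑ g ∈ F, x / g := Finset.sum_congr rfl fun g _ => count_dvd g x
      have hFsubG : ↑F ⊆ G := by
        intro g hg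
        rw [hF] at hg
        simp only [Finset.coe_filter, Set.mem_setOf_eq] at hg
        exact hg.2
      have hFgt : ∀ g ∈ F, K₀ < g := by
        intro g hg
        rw [hF, mem_filter, mem_Ioc] at hg
        have := le_max_left K₀ (H.sup id)
        omega
      have htail := hK₀ F hFsubG hFgt
      have hx0 : (0:ℝ) ≤ x := Nat.cast_nonneg x
      calc (((Finset.Icc 1 x).filter pBad).card : ℝ)
          ≤ ((∑ g ∈ F, x / g : ℕ) : ℝ) := by exact_mod_cast hcard1
        _ = ∑ g ∈ F, ((x / g : ℕ) : ℝ) := by rw [Nat.cast_sum]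
        _ ≤ ∑ g ∈ F, (x:ℝ) / g := Finset.sum_le_sum fun g _ => Nat.cast_div_le
        _ = (x:ℝ) * ∑ g ∈ F, (1:ℝ) / g := by
            rw [Finset.mul_sum]
            exact Finset.sum_congr rfl fun g _ => by rw [mul_one_div]
        _ ≤ (x:ℝ) * ε := mul_le_mul_of_nonneg_left htail.le hx0
        _ = ε * x := by ring
    have h1 : ∀ x : ℕ, f x ≤ (countIn {n | pK n} x : ℝ) / x := by
      intro x
      rw [hf]
      simp only
      rw [countIn_eq, countIn_eq]
      exact div_cast_mono x (count_mono_pt x _ _ (fun n _ _ h => hAsubK n h))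
    have h2 : ∀ x : ℕ, 1 ≤ x → (countIn {n | pK n} x : ℝ) / x ≤ f x + ε := by
      intro x hx
      have hx' : (0:ℝ) < x := by exact_mod_cast hx
      have hsplit := count_split x pK pA pBad (fun n h1 _ h3 => hKtoA n h1 h3)
      have hreal : (countIn {n | pK n} x : ℝ)
          ≤ (countIn {n | pA n} x : ℝ) + ε * x := by
        rw [countIn_eq, countIn_eq]
        have hcast : (((Finset.Icc 1 x).filter pK).card : ℝ)
            ≤ (((Finset.Icc 1 x).filter pA).card : ℝ)
              + (((Finset.Icc 1 x).filter pBad).card : ℝ) := by exact_mod_cast hsplit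
        linarith [hbad x]
      rw [hf]
      simp only
      calc (countIn {n | pK n} x : ℝ) / x
          ≤ ((countIn {n | pA n} x : ℝ) + ε * x) / x := by gcongr
        _ = (countIn {n | pA n} x : ℝ) / x + ε := by
            rw [add_div, mul_div_assoc, div_self (ne_of_gt hx'), mul_one]
    have l1 : limsup f atTop ≤ δK := by
      have h := limsup_le_limsup (Eventually.of_forall h1)
        (hbddge.isCoboundedUnder_le) (hTK.isBoundedUnder_le)
      rwa [hTK.limsup_eq] at h
    have hT2 : Tendsto (fun x : ℕ => (countIn {n | pK n} x : ℝ) / x - ε)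
        atTop (nhds (δK - ε)) := hTK.sub_const ε
    have l2 : δK - ε ≤ liminf f atTop := by
      have hev : ∀ᶠ x in atTop, (countIn {n | pK n} x : ℝ) / x - ε ≤ f x := by
        filter_upwards [eventually_ge_atTop 1] with x hx
        linarith [h2 x hx]
      have h := liminf_le_liminf hev (hT2.isBoundedUnder_ge) (hbddle.isCoboundedUnder_ge)
      rwa [hT2.liminf_eq] at h
    linarith
  have heq : liminf f atTop = limsup f atTop :=
    le_antisymm (liminf_le_limsup hbddle hbddge) (le_of_forall_pos_le_add main)
  refine ⟨limsup f atTop, tendsto_of_liminf_eq_limsup heq rfl hbddle hbddge, ?_⟩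
  rintro ⟨n₀, hn₀⟩
  obtain ⟨hn₀pos, hn₀odd, hn₀set⟩ := hn₀
  have hn₀' : (0:ℝ) < n₀ := by exact_mod_cast hn₀pos
  set ε : ℝ := 1 / (2 * (n₀:ℝ)) with hε
  have hεpos : 0 < ε := by positivity
  obtain ⟨K₀, hK₀⟩ := tail_small G hsum ε hεpos
  set K := max K₀ n₀ with hK
  set GK := (Finset.Icc 1 K).filter (· ∈ G) with hGK
  have hGKsub : ∀ g ∈ GK, g ∈ G := by
    intro g hg; rw [hGK, mem_filter] at hg; exact hg.2
  set P := GK.prod id with hPdef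
  have hP : 0 < P := Finset.prod_pos (fun g hg => (hG g (hGKsub g hg)).1)
  set q := 2 * P with hqdef
  have hq : 0 < q := by omega
  have hq' : (0:ℝ) < q := by exact_mod_cast hq
  have hgq : ∀ g ∈ GK, g ∣ q := fun g hg =>
    Dvd.dvd.mul_left (Finset.dvd_prod_of_mem id hg) 2
  set pC : ℕ → Prop := fun n => n % q = n₀ % q with hpC
  have hperC : ∀ n, pC (n + q) ↔ pC n := by
    intro n
    rw [hpC]
    simp only
    rw [Nat.add_mod_right]
  have hc1 : ((Finset.range q).filter pC).card = 1 := by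
    have hone : (Finset.range q).filter pC = {n₀ % q} := by
      ext r
      rw [mem_filter, mem_range, Finset.mem_singleton, hpC]
      simp only
      constructor
      · rintro ⟨hr, hr2⟩
        rw [← Nat.mod_eq_of_lt hr]
        exact hr2
      · rintro rfl
        exact ⟨Nat.mod_lt _ hq, Nat.mod_eq_of_lt (Nat.mod_lt _ hq)⟩
    rw [hone, card_singleton]
  have hTC : Tendsto (fun x : ℕ => (countIn {n | pC n} x : ℝ) / x) atTop
      (nhds (1 / q)) := by
    have h := hasDensity_periodic pC q hq hperC
    rw [HasDensity, hc1] at h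
    simpa using h
  set pBad : ℕ → Prop := fun n => ∃ g, g ∈ G ∧ K < g ∧ g ∣ n with hpBad
  have hn₀K : n₀ ≤ K := le_max_right _ _
  have hmodn₀ : ∀ n, pC n → ∀ g : ℕ, g ∣ q → (g ∣ n ↔ g ∣ n₀) := by
    intro n hnC g hgq'
    have h1 : n ≡ n₀ [MOD g] := Nat.ModEq.of_dvd hgq' hnC
    constructor
    · intro h
      exact Nat.modEq_zero_iff_dvd.mp (h1.symm.trans (Nat.modEq_zero_iff_dvd.mpr h))
    · intro h
      exact Nat.modEq_zero_iff_dvd.mp (h1.trans (Nat.modEq_zero_iff_dvd.mpr h))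
  have hCtoA : ∀ n, 1 ≤ n → pC n → pA n ∨ (pC n ∧ pBad n) := by
    intro n hn1 hnC
    by_cases hb : pBad n
    · exact Or.inr ⟨hnC, hb⟩
    · left
      have hodd : Odd n := by
        have h2q : (2:ℕ) ∣ q := ⟨P, hqdef⟩
        have h := Nat.ModEq.of_dvd h2q hnC
        rw [Nat.odd_iff] at hn₀odd ⊢
        rw [Nat.ModEq] at h
        omega
      refine ⟨by omega, hodd, ?_⟩
      ext g
      simp only [Set.mem_setOf_eq, Finset.mem_coe]
      constructor
      · rintro ⟨hgG, hgd⟩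
        by_cases hgK : g ≤ K
        · have hgGK : g ∈ GK := by
            rw [hGK, mem_filter, mem_Icc]
            exact ⟨⟨(hG g hgG).1, hgK⟩, hgG⟩
          have hgn₀ : g ∣ n₀ := (hmodn₀ n hnC g (hgq g hgGK)).mp hgd
          have h' : g ∈ {g | g ∈ G ∧ g ∣ n₀} := ⟨hgG, hgn₀⟩
          rw [hn₀set] at h'
          exact Finset.mem_coe.mp h'
        · exact absurd ⟨g, hgG, by omega, hgd⟩ hb
      · intro hgH
        have hgG : g ∈ G := hH (Finset.mem_coe.mpr hgH)
        have hgn₀ : g ∣ n₀ := by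
          have h' : g ∈ ({g | g ∈ G ∧ g ∣ n₀} : Set ℕ) := by
            rw [hn₀set]; exact Finset.mem_coe.mpr hgH
          exact h'.2
        have hgK : g ≤ K := le_trans (Nat.le_of_dvd hn₀pos hgn₀) hn₀K
        have hgGK : g ∈ GK := by
          rw [hGK, mem_filter, mem_Icc]
          exact ⟨⟨(hG g hgG).1, hgK⟩, hgG⟩
        exact ⟨hgG, (hmodn₀ n hnC g (hgq g hgGK)).mpr hgn₀⟩
  obtain ⟨K₂₀, hK₂⟩ := tail_small G hsum (1 / (4 * (q:ℝ))) (by positivity)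
  set K₂ := max K K₂₀ with hK₂def
  set C₀ := ((Finset.Ioc K K₂).filter (· ∈ G)).card with hC₀
  have key : ∀ x : ℕ, 1 ≤ x →
      (countIn {n | pC n} x : ℝ) / x - (n₀:ℝ) * ε / q - (C₀:ℝ) / x - 1 / (4 * q)
        ≤ f x := by
    intro x hx
    have hx' : (0:ℝ) < x := by exact_mod_cast hx
    have hsplit := count_split x pC pA (fun n => pC n ∧ pBad n)
      (fun n h1 _ h3 => hCtoA n h1 h3)
    set F := (Finset.Ioc K x).filter (· ∈ G) with hF
    have hsub : (Finset.Icc 1 x).filter (fun n => pC n ∧ pBad n) ⊆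
        F.biUnion (fun g => (Finset.Icc 1 x).filter (fun n => n % q = n₀ % q ∧ g ∣ n)) := by
      intro n hn
      rw [mem_filter, mem_Icc] at hn
      obtain ⟨⟨hn1, hnx⟩, hnC, g, hgG, hgK, hgd⟩ := hn
      rw [Finset.mem_biUnion]
      refine ⟨g, ?_, ?_⟩
      · rw [hF, mem_filter, mem_Ioc]
        exact ⟨⟨hgK, le_trans (Nat.le_of_dvd (by omega) hgd) hnx⟩, hgG⟩
      · rw [mem_filter, mem_Icc]
        exact ⟨⟨hn1, hnx⟩, hnC, hgd⟩
    have hFsubG : ↑F ⊆ G := by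
      intro g hg
      rw [hF] at hg
      simp only [Finset.coe_filter, Set.mem_setOf_eq] at hg
      exact hg.2
    have hFgt : ∀ g ∈ F, K₀ < g := by
      intro g hg
      rw [hF, mem_filter, mem_Ioc] at hg
      have := le_max_left K₀ n₀
      omega
    have htail := hK₀ F hFsubG hFgt
    -- bound on the class-bad count
    have hclassbad : ((((Finset.Icc 1 x)).filter (fun n => pC n ∧ pBad n)).card : ℝ)
        ≤ (x:ℝ) * n₀ * ε / q + C₀ + (x:ℝ) * (1 / (4 * q)) := by
      have hstep1 : (((Finset.Icc 1 x).filter (fun n => pC n ∧ pBad n)).card : ℝ)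
          ≤ ∑ g ∈ F, ((((Finset.Icc 1 x).filter
              (fun n => n % q = n₀ % q ∧ g ∣ n)).card : ℝ)) := by
        have h1 : ((Finset.Icc 1 x).filter (fun n => pC n ∧ pBad n)).card
            ≤ ∑ g ∈ F, ((Finset.Icc 1 x).filter
              (fun n => n % q = n₀ % q ∧ g ∣ n)).card :=
          le_trans (Finset.card_le_card hsub) Finset.card_biUnion_le
        exact_mod_cast h1
      have hstep2 : ∑ g ∈ F, ((((Finset.Icc 1 x).filter
            (fun n => n % q = n₀ % q ∧ g ∣ n)).card : ℝ))
          ≤ ∑ g ∈ F, ((x:ℝ) * n₀ / (q * g) + 1) := by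
        apply Finset.sum_le_sum
        intro g hg
        exact count_class_dvd q g n₀ x hq (hG g (hFsubG hg)).1 hn₀pos
      have hstep3 : ∑ g ∈ F, ((x:ℝ) * n₀ / (q * g) + 1)
          = (x:ℝ) * n₀ / q * (∑ g ∈ F, (1:ℝ) / g) + F.card := by
        rw [Finset.sum_add_distrib, Finset.mul_sum]
        simp only [Finset.sum_const, nsmul_eq_mul, mul_one]
        congr 1
        apply Finset.sum_congr rfl
        intro g hg
        ring
      have hstep4 : (x:ℝ) * n₀ / q * (∑ g ∈ F, (1:ℝ) / g) ≤ (x:ℝ) * n₀ / q * ε := by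
        apply mul_le_mul_of_nonneg_left htail.le
        positivity
      -- F.card bound
      have hstep5 : (F.card : ℝ) ≤ C₀ + (x:ℝ) * (1 / (4 * q)) := by
        set F₂ := (Finset.Ioc K₂ x).filter (· ∈ G) with hF₂
        have hsubF : F ⊆ (Finset.Ioc K K₂).filter (· ∈ G) ∪ F₂ := by
          intro g hg
          rw [hF, mem_filter, mem_Ioc] at hg
          rw [Finset.mem_union, hF₂, mem_filter, mem_filter, mem_Ioc, mem_Ioc]
          by_cases hgK₂ : g ≤ K₂
          · exact Or.inl ⟨⟨hg.1.1, hgK₂⟩, hg.2⟩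
          · refine Or.inr ⟨⟨by omega, hg.1.2⟩, hg.2⟩
        have hcardF : F.card ≤ C₀ + F₂.card := by
          calc F.card ≤ ((Finset.Ioc K K₂).filter (· ∈ G) ∪ F₂).card :=
              Finset.card_le_card hsubF
          _ ≤ C₀ + F₂.card := by rw [hC₀]; exact Finset.card_union_le _ _
        have hF₂sub : ↑F₂ ⊆ G := by
          intro g hg
          rw [hF₂] at hg
          simp only [Finset.coe_filter, Set.mem_setOf_eq] at hg
          exact hg.2
        have hF₂gt : ∀ g ∈ F₂, K₂₀ < g := by
          intro g hg
          rw [hF₂, mem_filter, mem_Ioc] at hg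
          have := le_max_right K K₂₀
          omega
        have htail2 := hK₂ F₂ hF₂sub hF₂gt
        have hcardF₂ : (F₂.card : ℝ) ≤ (x:ℝ) * (1 / (4 * q)) := by
          have h1 : (F₂.card : ℝ) = ∑ g ∈ F₂, (1:ℝ) := by simp
          have h2 : ∑ g ∈ F₂, (1:ℝ) ≤ ∑ g ∈ F₂, (x:ℝ) / g := by
            apply Finset.sum_le_sum
            intro g hg
            rw [hF₂, mem_filter, mem_Ioc] at hg
            have hg0 : 0 < g := (hG g (by exact hg.2)).1
            have hg0' : (0:ℝ) < g := by exact_mod_cast hg0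
            rw [le_div_iff₀ hg0', one_mul]
            exact_mod_cast hg.1.2
          have h3 : ∑ g ∈ F₂, (x:ℝ) / g = (x:ℝ) * ∑ g ∈ F₂, (1:ℝ) / g := by
            rw [Finset.mul_sum]
            exact Finset.sum_congr rfl fun g _ => by rw [mul_one_div]
          have hx0 : (0:ℝ) ≤ x := Nat.cast_nonneg x
          calc (F₂.card : ℝ) = ∑ g ∈ F₂, (1:ℝ) := h1
            _ ≤ ∑ g ∈ F₂, (x:ℝ) / g := h2
            _ = (x:ℝ) * ∑ g ∈ F₂, (1:ℝ) / g := h3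
            _ ≤ (x:ℝ) * (1 / (4 * q)) := mul_le_mul_of_nonneg_left htail2.le hx0
        have hcastF : (F.card : ℝ) ≤ (C₀ : ℝ) + (F₂.card : ℝ) := by exact_mod_cast hcardF
        linarith
      calc ((((Finset.Icc 1 x)).filter (fun n => pC n ∧ pBad n)).card : ℝ)
          ≤ ∑ g ∈ F, ((((Finset.Icc 1 x).filter
              (fun n => n % q = n₀ % q ∧ g ∣ n)).card : ℝ)) := hstep1
        _ ≤ ∑ g ∈ F, ((x:ℝ) * n₀ / (q * g) + 1) := hstep2
        _ = (x:ℝ) * n₀ / q * (∑ g ∈ F, (1:ℝ) / g) + F.card := hstep3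
        _ ≤ (x:ℝ) * n₀ / q * ε + (C₀ + (x:ℝ) * (1 / (4 * q))) := by
            have := hstep4
            have := hstep5
            linarith
        _ = (x:ℝ) * n₀ * ε / q + C₀ + (x:ℝ) * (1 / (4 * q)) := by ring
    -- put it together
    have hcastsplit : ((countIn {n | pC n} x : ℕ) : ℝ)
        ≤ ((countIn {n | pA n} x : ℕ) : ℝ)
          + (((Finset.Icc 1 x).filter (fun n => pC n ∧ pBad n)).card : ℝ) := by
      rw [countIn_eq, countIn_eq]
      exact_mod_cast hsplit
    have hfinal : ((countIn {n | pC n} x : ℕ) : ℝ)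
        ≤ ((countIn {n | pA n} x : ℕ) : ℝ)
          + ((x:ℝ) * n₀ * ε / q + C₀ + (x:ℝ) * (1 / (4 * q))) := by linarith
    rw [hf]
    simp only
    have hdiv : ((countIn {n | pC n} x : ℕ) : ℝ) / x
        ≤ ((countIn {n | pA n} x : ℕ) : ℝ) / x
          + ((n₀:ℝ) * ε / q + (C₀:ℝ) / x + 1 / (4 * q)) := by
      have h2 : ((countIn {n | pA n} x : ℕ) : ℝ) / x
            + ((n₀:ℝ) * ε / q + (C₀:ℝ) / x + 1 / (4 * q))
          = (((countIn {n | pA n} x : ℕ) : ℝ)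
            + ((x:ℝ) * n₀ * ε / q + C₀ + (x:ℝ) * (1 / (4 * q)))) / x := by
        field_simp
      rw [h2]
      gcongr
    linarith [hdiv]
  have hTR : Tendsto (fun x : ℕ => (countIn {n | pC n} x : ℝ) / x - (n₀:ℝ) * ε / q
      - (C₀:ℝ) / x - 1 / (4 * q)) atTop
      (nhds (1 / (q:ℝ) - (n₀:ℝ) * ε / q - 0 - 1 / (4 * q))) :=
    ((hTC.sub_const _).sub (tendsto_const_div_atTop_nhds_zero_nat (C₀ : ℝ))).sub_const _
  have hval : 1 / (q:ℝ) - (n₀:ℝ) * ε / q - 0 - 1 / (4 * q) = 1 / (4 * q) := by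
    rw [hε]
    field_simp
    ring
  have l3 : 1 / (4 * (q:ℝ)) ≤ liminf f atTop := by
    have hev : ∀ᶠ x in atTop, (countIn {n | pC n} x : ℝ) / x - (n₀:ℝ) * ε / q
        - (C₀:ℝ) / x - 1 / (4 * q) ≤ f x := by
      filter_upwards [eventually_ge_atTop 1] with x hx
      exact key x hx
    have h := liminf_le_liminf hev (hTR.isBoundedUnder_ge) (hbddle.isCoboundedUnder_ge)
    rwa [hTR.liminf_eq, hval] at h
  have hpos : 0 < 1 / (4 * (q:ℝ)) := by positivity
  rw [← heq]
  linarith
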